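/- Let A be a Hopf algebra, K a central Hopf subalgebra, K⁺ = K ∩ ker ε, and ρ a convolution-invertible unital 2-cocycle on A satisfying ρ(a, x) = ε(a)ε(x) = ρ(x, a) for all a ∈ A and x ∈ K⁺·A + A·K⁺ (i.e. ρ vanishes on the kernel of A⊗A → (A/AK⁺) ⊗ (A/AK⁺)). Then ρ factors through a unital 2-cocycle ρ' on the quotient Hopf algebra A/AK⁺, and (A/AK⁺)_{ρ'} ≅ A_ρ/AK⁺ as Hopf algebras. -/

import Mathlib

/- STATEMENT 13: Let `A` be a Hopf algebra, `K` a central Hopf subalgebra,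
`K⁺ = K ∩ ker ε`, and `ρ` a convolution-invertible unital 2-cocycle on `A` vanishing
(in the sense `ρ(a,x) = ε(a)ε(x) = ρ(x,a)`) on `A ⊗ AK⁺ + AK⁺ ⊗ A`, i.e. on the
kernel of `A ⊗ A → (A/AK⁺) ⊗ (A/AK⁺)`.  Then `ρ` factors through a unital 2-cocycle
`ρ'` on the quotient Hopf algebra `A/AK⁺`, and `(A/AK⁺)_{ρ'} ≅ A_ρ/AK⁺` as Hopf
algebras.  The quotient Hopf algebra `A/AK⁺` is represented by a surjective bialgebra
map `π : A → Q` with kernel `AK⁺`; the isomorphism `(A/AK⁺)_{ρ'} ≅ A_ρ/AK⁺` is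
expressed by saying that `π` intertwines the `ρ`-deformed multiplication of `A` with
the `ρ'`-deformed multiplication of `Q` (the coalgebra structures being untouched by
deformation). -/

open TensorProduct

universe u

variable {k : Type u} [Field k]

/-- Convolution product of two functionals on a coalgebra. -/
noncomputable def conv {C : Type u} [AddCommGroup C] [Module k C] [Coalgebra k C]
    (f g : C →ₗ[k] k) : C →ₗ[k] k :=
  LinearMap.mul' k k ∘ₗ TensorProduct.map f g ∘ₗ Coalgebra.comul

/-- `x ↦ φ(x₁) • μ(x₂)`. -/
noncomputable def convL {C A : Type u} [AddCommGroup C] [Module k C] [Coalgebra k C]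
    [Ring A] [Algebra k A] (φ : C →ₗ[k] k) (μ : C →ₗ[k] A) : C →ₗ[k] A :=
  (TensorProduct.lid k A).toLinearMap ∘ₗ TensorProduct.map φ μ ∘ₗ Coalgebra.comul

/-- `x ↦ φ(x₂) • μ(x₁)`. -/
noncomputable def convR {C A : Type u} [AddCommGroup C] [Module k C] [Coalgebra k C]
    [Ring A] [Algebra k A] (μ : C →ₗ[k] A) (φ : C →ₗ[k] k) : C →ₗ[k] A :=
  (TensorProduct.rid k A).toLinearMap ∘ₗ TensorProduct.map μ φ ∘ₗ Coalgebra.comul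

/-- The deformed multiplication `x ⊗ y ↦ σ(x₁,y₁) x₂y₂ σ'(x₃,y₃)`. -/
noncomputable def deform {A : Type u} [Ring A] [Bialgebra k A]
    (σ : A ⊗[k] A →ₗ[k] k) (μ : A ⊗[k] A →ₗ[k] A) (σ' : A ⊗[k] A →ₗ[k] k) :
    A ⊗[k] A →ₗ[k] A :=
  convR (convL σ μ) σ'

/-- The 2-cocycle condition `σ(x₁,y₁)σ(x₂y₂,z) = σ(y₁,z₁)σ(x,y₂z₂)` on a bialgebra. -/
noncomputable def IsCocycle {A : Type u} [Ring A] [Bialgebra k A]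
    (σ : A ⊗[k] A →ₗ[k] k) : Prop :=
  conv (LinearMap.mul' k k ∘ₗ TensorProduct.map σ Coalgebra.counit)
      (σ ∘ₗ TensorProduct.map (LinearMap.mul' k A) LinearMap.id) =
    conv ((LinearMap.mul' k k ∘ₗ TensorProduct.map Coalgebra.counit σ) ∘ₗ
        (TensorProduct.assoc k A A A).toLinearMap)
      (σ ∘ₗ TensorProduct.map LinearMap.id (LinearMap.mul' k A) ∘ₗ
        (TensorProduct.assoc k A A A).toLinearMap)

section AuxConv

open Coalgebra

variable {C D E : Type u} [AddCommGroup C] [Module k C] [Coalgebra k C]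
  [AddCommGroup D] [Module k D] [Coalgebra k D]
  [AddCommGroup E] [Module k E] [Coalgebra k E]

lemma conv_apply (f g : C →ₗ[k] k) (z : C) {ι_r : Type*} (r : Coalgebra.Repr k z ι_r) :
    conv f g z = ∑ i ∈ r.index, f (r.left i) * g (r.right i) := by
  simp only [conv, LinearMap.comp_apply, ← r.eq, map_sum, TensorProduct.map_tmul,
    LinearMap.mul'_apply]

lemma conv_assoc (f g h : C →ₗ[k] k) : conv (conv f g) h = conv f (conv g h) := by
  ext a
  set r := ℛ k a with hr
  have key := congrArg (LinearMap.mul' k k ∘ₗ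
      TensorProduct.map f (LinearMap.mul' k k ∘ₗ TensorProduct.map g h))
    (Coalgebra.sum_tmul_tmul_eq (R := k) r (fun i => ℛ k (r.left i)) (fun i => ℛ k (r.right i)))
  simp only [map_sum, LinearMap.comp_apply, TensorProduct.map_tmul, LinearMap.mul'_apply] at key
  rw [conv_apply (conv f g) h a r, conv_apply f (conv g h) a r]
  have L : ∑ i ∈ r.index, conv f g (r.left i) * h (r.right i)
      = ∑ i ∈ r.index, ∑ j ∈ (ℛ k (r.left i)).index,
          f ((ℛ k (r.left i)).left j) * ((g ((ℛ k (r.left i)).right j)) * h (r.right i)) :=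
    Finset.sum_congr rfl fun i _ => by
      rw [conv_apply f g _ (ℛ k (r.left i)), Finset.sum_mul]
      exact Finset.sum_congr rfl fun j _ => by ring
  have R : ∑ i ∈ r.index, f (r.left i) * conv g h (r.right i)
      = ∑ i ∈ r.index, ∑ j ∈ (ℛ k (r.right i)).index,
          f (r.left i) * (g ((ℛ k (r.right i)).left j) * h ((ℛ k (r.right i)).right j)) :=
    Finset.sum_congr rfl fun i _ => by
      rw [conv_apply g h _ (ℛ k (r.right i)), Finset.mul_sum]
  rw [L, R]
  exact key

lemma conv_counit (f : C →ₗ[k] k) : conv f Coalgebra.counit = f := by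
  ext a
  have key := congrArg (LinearMap.mul' k k ∘ₗ TensorProduct.map f (LinearMap.id (R := k) (M := k)))
    (Coalgebra.sum_tmul_counit_eq (ℛ k a))
  simp only [map_sum, LinearMap.comp_apply, TensorProduct.map_tmul, LinearMap.mul'_apply,
    LinearMap.id_coe, id_eq, mul_one] at key
  rw [conv_apply f Coalgebra.counit a (ℛ k a)]
  exact key

lemma counit_conv (f : C →ₗ[k] k) : conv Coalgebra.counit f = f := by
  ext a
  have key := congrArg (LinearMap.mul' k k ∘ₗ TensorProduct.map (LinearMap.id (R := k) (M := k)) f)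
    (Coalgebra.sum_counit_tmul_eq (ℛ k a))
  simp only [map_sum, LinearMap.comp_apply, TensorProduct.map_tmul, LinearMap.mul'_apply,
    LinearMap.id_coe, id_eq, one_mul] at key
  rw [conv_apply Coalgebra.counit f a (ℛ k a)]
  exact key

lemma conv_inv_unique {x u u' : C →ₗ[k] k} (h1 : conv x u = Coalgebra.counit)
    (h2 : conv u' x = Coalgebra.counit) : u' = u := by
  have h3 := conv_assoc u' x u
  rw [h1, h2, conv_counit, counit_conv] at h3
  exact h3.symm

lemma conv_idem_eq_counit {f g : C →ₗ[k] k} (hff : conv f f = f)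
    (hfg : conv f g = Coalgebra.counit) : f = Coalgebra.counit := by
  have h3 := conv_assoc f f g
  rw [hff, hfg, conv_counit] at h3
  exact h3.symm

lemma conv_comp (f g : D →ₗ[k] k) (φ : C →ₗ[k] D)
    (hφ : Coalgebra.comul ∘ₗ φ = TensorProduct.map φ φ ∘ₗ Coalgebra.comul) :
    conv f g ∘ₗ φ = conv (f ∘ₗ φ) (g ∘ₗ φ) := by
  unfold conv
  rw [TensorProduct.map_comp]
  simp only [LinearMap.comp_assoc]
  rw [hφ]

end AuxConv
section AuxCoalg

open Coalgebra

variable {C D : Type u} [AddCommGroup C] [Module k C] [Coalgebra k C]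
  [AddCommGroup D] [Module k D] [Coalgebra k D]

lemma repr_smul_left {a : C} {ι_r : Type*} (r : Coalgebra.Repr k a ι_r) :
    ∑ i ∈ r.index, Coalgebra.counit (R := k) (r.right i) • r.left i = a := by
  have key := congrArg (TensorProduct.rid k C).toLinearMap
    (Coalgebra.sum_tmul_counit_eq (R := k) r)
  simp only [map_sum, LinearEquiv.coe_coe, TensorProduct.rid_tmul, one_smul] at key
  exact key

lemma repr_smul_right {a : C} {ι_r : Type*} (r : Coalgebra.Repr k a ι_r) :
    ∑ i ∈ r.index, Coalgebra.counit (R := k) (r.left i) • r.right i = a := by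
  have key := congrArg (TensorProduct.lid k C).toLinearMap
    (Coalgebra.sum_counit_tmul_eq (R := k) r)
  simp only [map_sum, LinearEquiv.coe_coe, TensorProduct.lid_tmul, one_smul] at key
  exact key

lemma repr_counit_mul {a : C} {ι_r : Type*} (r : Coalgebra.Repr k a ι_r) :
    ∑ i ∈ r.index, Coalgebra.counit (R := k) (r.left i) * Coalgebra.counit (R := k) (r.right i)
      = Coalgebra.counit (R := k) a := by
  have key := congrArg (LinearMap.mul' k k ∘ₗ
      TensorProduct.map (LinearMap.id (R := k) (M := k)) Coalgebra.counit)
    (Coalgebra.sum_counit_tmul_eq (R := k) r)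
  simp only [map_sum, LinearMap.comp_apply, TensorProduct.map_tmul, LinearMap.mul'_apply,
    LinearMap.id_coe, id_eq, one_mul] at key
  exact key

/-- A linear map compatible with comultiplication and counit. -/
def IsCoalgHom {C D : Type u} [AddCommGroup C] [Module k C] [Coalgebra k C]
    [AddCommGroup D] [Module k D] [Coalgebra k D] (φ : C →ₗ[k] D) : Prop :=
  Coalgebra.comul ∘ₗ φ = TensorProduct.map φ φ ∘ₗ Coalgebra.comul ∧
  Coalgebra.counit ∘ₗ φ = Coalgebra.counit

lemma IsCoalgHom.comp {C D E : Type u} [AddCommGroup C] [Module k C] [Coalgebra k C]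
    [AddCommGroup D] [Module k D] [Coalgebra k D]
    [AddCommGroup E] [Module k E] [Coalgebra k E]
    {φ : C →ₗ[k] D} {ψ : D →ₗ[k] E} (hψ : IsCoalgHom ψ) (hφ : IsCoalgHom φ) :
    IsCoalgHom (ψ ∘ₗ φ) := by
  constructor
  · rw [← LinearMap.comp_assoc, hψ.1, LinearMap.comp_assoc, hφ.1, TensorProduct.map_comp,
      LinearMap.comp_assoc]
  · rw [← LinearMap.comp_assoc, hψ.2, hφ.2]

lemma ttt_nat {M N P Q M' N' P' Q' : Type u}
    [AddCommGroup M] [Module k M] [AddCommGroup N] [Module k N]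
    [AddCommGroup P] [Module k P] [AddCommGroup Q] [Module k Q]
    [AddCommGroup M'] [Module k M'] [AddCommGroup N'] [Module k N']
    [AddCommGroup P'] [Module k P'] [AddCommGroup Q'] [Module k Q']
    (f : M →ₗ[k] M') (g : N →ₗ[k] N') (h : P →ₗ[k] P') (l : Q →ₗ[k] Q') :
    (TensorProduct.tensorTensorTensorComm k M' N' P' Q').toLinearMap ∘ₗ
      TensorProduct.map (TensorProduct.map f g) (TensorProduct.map h l) =
    TensorProduct.map (TensorProduct.map f h) (TensorProduct.map g l) ∘ₗ
      (TensorProduct.tensorTensorTensorComm k M N P Q).toLinearMap := by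
  apply TensorProduct.ext'
  intro x y
  induction x using TensorProduct.induction_on with
  | zero => simp
  | tmul m n =>
    induction y using TensorProduct.induction_on with
    | zero => simp
    | tmul p q => simp
    | add u v hu hv =>
      simp only [TensorProduct.tmul_add, map_add] at hu hv ⊢
      rw [hu, hv]
  | add u v hu hv =>
    simp only [TensorProduct.add_tmul, map_add] at hu hv ⊢
    rw [hu, hv]

lemma comul_tensor_def :
    (Coalgebra.comul : C ⊗[k] D →ₗ[k] (C ⊗[k] D) ⊗[k] (C ⊗[k] D)) =
      (TensorProduct.tensorTensorTensorComm k C C D D).toLinearMap ∘ₗ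
        TensorProduct.map Coalgebra.comul Coalgebra.comul := rfl

lemma counit_tensor_def :
    (Coalgebra.counit : C ⊗[k] D →ₗ[k] k) =
      LinearMap.mul' k k ∘ₗ TensorProduct.map Coalgebra.counit Coalgebra.counit := by
  apply TensorProduct.ext'
  intro c d
  simp only [LinearMap.comp_apply, TensorProduct.map_tmul, LinearMap.mul'_apply]
  rw [TensorProduct.counit_tmul, smul_eq_mul, mul_comm]

lemma counit_tmul (c : C) (d : D) :
    Coalgebra.counit (R := k) (c ⊗ₜ[k] d) =
      Coalgebra.counit (R := k) c * Coalgebra.counit (R := k) d := by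
  rw [TensorProduct.counit_tmul, smul_eq_mul, mul_comm]

lemma IsCoalgHom.map {C D C' D' : Type u} [AddCommGroup C] [Module k C] [Coalgebra k C]
    [AddCommGroup D] [Module k D] [Coalgebra k D]
    [AddCommGroup C'] [Module k C'] [Coalgebra k C']
    [AddCommGroup D'] [Module k D'] [Coalgebra k D']
    {f : C →ₗ[k] C'} {g : D →ₗ[k] D'} (hf : IsCoalgHom f) (hg : IsCoalgHom g) :
    IsCoalgHom (TensorProduct.map f g) := by
  constructor
  · rw [comul_tensor_def, comul_tensor_def, LinearMap.comp_assoc,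
      ← TensorProduct.map_comp, hf.1, hg.1, TensorProduct.map_comp, ← LinearMap.comp_assoc,
      ttt_nat, LinearMap.comp_assoc]
  · rw [counit_tensor_def, counit_tensor_def, LinearMap.comp_assoc, ← TensorProduct.map_comp,
      hf.2, hg.2]

end AuxCoalg
section AuxTensor

open Coalgebra

variable {C D E : Type u} [AddCommGroup C] [Module k C] [Coalgebra k C]
  [AddCommGroup D] [Module k D] [Coalgebra k D]
  [AddCommGroup E] [Module k E] [Coalgebra k E]

lemma comul_tmul_repr (c : C) (d : D) {ι_rc : Type*} (rc : Coalgebra.Repr k c ι_rc) {ι_rd : Type*} (rd : Coalgebra.Repr k d ι_rd) :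
    Coalgebra.comul (R := k) (c ⊗ₜ[k] d) =
      ∑ i ∈ rc.index, ∑ j ∈ rd.index,
        (rc.left i ⊗ₜ[k] rd.left j) ⊗ₜ[k] (rc.right i ⊗ₜ[k] rd.right j) := by
  have h0 : Coalgebra.comul (R := k) (c ⊗ₜ[k] d) =
      (TensorProduct.tensorTensorTensorComm k C C D D)
        (Coalgebra.comul (R := k) c ⊗ₜ[k] Coalgebra.comul (R := k) d) := rfl
  rw [h0, ← rc.eq, ← rd.eq]
  simp only [TensorProduct.sum_tmul, TensorProduct.tmul_sum, map_sum,
    TensorProduct.tensorTensorTensorComm_tmul]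
  exact Finset.sum_comm

lemma conv_apply_tmul (f g : C ⊗[k] D →ₗ[k] k) (c : C) (d : D)
    {ι_rc : Type*} (rc : Coalgebra.Repr k c ι_rc) {ι_rd : Type*} (rd : Coalgebra.Repr k d ι_rd) :
    conv f g (c ⊗ₜ[k] d) = ∑ i ∈ rc.index, ∑ j ∈ rd.index,
      f (rc.left i ⊗ₜ[k] rd.left j) * g (rc.right i ⊗ₜ[k] rd.right j) := by
  simp only [conv, LinearMap.comp_apply]
  rw [comul_tmul_repr c d rc rd]
  simp only [map_sum, TensorProduct.map_tmul, LinearMap.mul'_apply]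

set_option synthInstance.maxHeartbeats 1000000 in
lemma comul_tmul3_repr (c : C) (d : D) (e : E) {ι_rc : Type*} (rc : Coalgebra.Repr k c ι_rc)
    {ι_rd : Type*} (rd : Coalgebra.Repr k d ι_rd) {ι_re : Type*} (re : Coalgebra.Repr k e ι_re) :
    Coalgebra.comul (R := k) ((c ⊗ₜ[k] d) ⊗ₜ[k] e) =
      ∑ i ∈ rc.index, ∑ j ∈ rd.index, ∑ m ∈ re.index,
        ((rc.left i ⊗ₜ[k] rd.left j) ⊗ₜ[k] re.left m) ⊗ₜ[k]
          ((rc.right i ⊗ₜ[k] rd.right j) ⊗ₜ[k] re.right m) := by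
  have h0 : Coalgebra.comul (R := k) ((c ⊗ₜ[k] d) ⊗ₜ[k] e) =
      (TensorProduct.tensorTensorTensorComm k (C ⊗[k] D) (C ⊗[k] D) E E)
        (Coalgebra.comul (R := k) (c ⊗ₜ[k] d) ⊗ₜ[k] Coalgebra.comul (R := k) e) := rfl
  rw [h0, comul_tmul_repr c d rc rd, ← re.eq]
  simp only [TensorProduct.sum_tmul, TensorProduct.tmul_sum, map_sum,
    TensorProduct.tensorTensorTensorComm_tmul]
  rw [Finset.sum_comm]
  refine Finset.sum_congr rfl fun i _ => ?_
  exact Finset.sum_comm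

lemma conv_apply_tmul3 (f g : (C ⊗[k] D) ⊗[k] E →ₗ[k] k) (c : C) (d : D) (e : E)
    {ι_rc : Type*} (rc : Coalgebra.Repr k c ι_rc) {ι_rd : Type*} (rd : Coalgebra.Repr k d ι_rd) {ι_re : Type*} (re : Coalgebra.Repr k e ι_re) :
    conv f g ((c ⊗ₜ[k] d) ⊗ₜ[k] e) = ∑ i ∈ rc.index, ∑ j ∈ rd.index, ∑ m ∈ re.index,
      f ((rc.left i ⊗ₜ[k] rd.left j) ⊗ₜ[k] re.left m) *
        g ((rc.right i ⊗ₜ[k] rd.right j) ⊗ₜ[k] re.right m) := by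
  simp only [conv, LinearMap.comp_apply]
  rw [comul_tmul3_repr c d e rc rd re]
  simp only [map_sum, TensorProduct.map_tmul, LinearMap.mul'_apply]

noncomputable def epsR : C ⊗[k] D →ₗ[k] C :=
  (TensorProduct.rid k C).toLinearMap ∘ₗ TensorProduct.map LinearMap.id Coalgebra.counit

noncomputable def epsL : C ⊗[k] D →ₗ[k] D :=
  (TensorProduct.lid k D).toLinearMap ∘ₗ TensorProduct.map Coalgebra.counit LinearMap.id

@[simp] lemma epsR_tmul (c : C) (d : D) :
    epsR (c ⊗ₜ[k] d) = Coalgebra.counit (R := k) d • c := by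
  simp [epsR]

@[simp] lemma epsL_tmul (c : C) (d : D) :
    epsL (c ⊗ₜ[k] d) = Coalgebra.counit (R := k) c • d := by
  simp [epsL]

lemma isCoalgHom_epsR : IsCoalgHom (epsR : C ⊗[k] D →ₗ[k] C) := by
  constructor
  · apply TensorProduct.ext'
    intro c d
    set rc := ℛ k c with hrc
    set rd := ℛ k d with hrd
    simp only [LinearMap.comp_apply]
    rw [comul_tmul_repr c d rc rd, epsR_tmul]
    simp only [map_sum, map_smul, TensorProduct.map_tmul, epsR_tmul,
      TensorProduct.smul_tmul', TensorProduct.tmul_smul, smul_smul]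
    rw [← rc.eq, Finset.smul_sum]
    refine Finset.sum_congr rfl fun i _ => ?_
    simp only [← TensorProduct.smul_tmul']
    rw [← Finset.sum_smul]
    congr 1
    rw [← repr_counit_mul rd]
    exact Finset.sum_congr rfl fun j _ => mul_comm _ _
  · apply TensorProduct.ext'
    intro c d
    simp only [LinearMap.comp_apply, epsR_tmul, map_smul, _root_.counit_tmul, smul_eq_mul]
    exact mul_comm _ _

lemma isCoalgHom_epsL : IsCoalgHom (epsL : C ⊗[k] D →ₗ[k] D) := by
  constructor
  · apply TensorProduct.ext'
    intro c d
    set rc := ℛ k c with hrc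
    set rd := ℛ k d with hrd
    simp only [LinearMap.comp_apply]
    rw [comul_tmul_repr c d rc rd, epsL_tmul]
    simp only [map_sum, map_smul, TensorProduct.map_tmul, epsL_tmul,
      TensorProduct.smul_tmul', TensorProduct.tmul_smul, smul_smul]
    rw [← rd.eq, Finset.smul_sum, Finset.sum_comm]
    refine Finset.sum_congr rfl fun j _ => ?_
    simp only [← TensorProduct.smul_tmul']
    rw [← Finset.sum_smul]
    congr 1
    rw [← repr_counit_mul rc]
    exact Finset.sum_congr rfl fun i _ => mul_comm _ _
  · apply TensorProduct.ext'
    intro c d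
    simp only [LinearMap.comp_apply, epsL_tmul, map_smul, _root_.counit_tmul, smul_eq_mul]

lemma isCoalgHom_mkL (c₀ : C) (h1 : Coalgebra.comul (R := k) c₀ = c₀ ⊗ₜ[k] c₀)
    (h2 : Coalgebra.counit (R := k) c₀ = 1) :
    IsCoalgHom (TensorProduct.mk k C D c₀) := by
  constructor
  · ext d
    have h0 : Coalgebra.comul (R := k) (c₀ ⊗ₜ[k] d) =
        (TensorProduct.tensorTensorTensorComm k C C D D)
          (Coalgebra.comul (R := k) c₀ ⊗ₜ[k] Coalgebra.comul (R := k) d) := rfl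
    simp only [LinearMap.comp_apply, TensorProduct.mk_apply]
    rw [h0, h1, ← (ℛ k d).eq]
    simp only [TensorProduct.tmul_sum, map_sum, TensorProduct.tensorTensorTensorComm_tmul,
      TensorProduct.map_tmul, TensorProduct.mk_apply]
  · ext d
    simp only [LinearMap.comp_apply, TensorProduct.mk_apply, _root_.counit_tmul, h2, one_mul]

lemma isCoalgHom_mkR (d₀ : D) (h1 : Coalgebra.comul (R := k) d₀ = d₀ ⊗ₜ[k] d₀)
    (h2 : Coalgebra.counit (R := k) d₀ = 1) :
    IsCoalgHom ((TensorProduct.mk k C D).flip d₀) := by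
  constructor
  · ext c
    have h0 : Coalgebra.comul (R := k) (c ⊗ₜ[k] d₀) =
        (TensorProduct.tensorTensorTensorComm k C C D D)
          (Coalgebra.comul (R := k) c ⊗ₜ[k] Coalgebra.comul (R := k) d₀) := rfl
    simp only [LinearMap.comp_apply, LinearMap.flip_apply, TensorProduct.mk_apply]
    rw [h0, h1, ← (ℛ k c).eq]
    simp only [TensorProduct.sum_tmul, map_sum, TensorProduct.tensorTensorTensorComm_tmul,
      TensorProduct.map_tmul, TensorProduct.mk_apply, LinearMap.flip_apply]
  · ext c
    simp only [LinearMap.comp_apply, LinearMap.flip_apply, TensorProduct.mk_apply, _root_.counit_tmul,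
      h2, mul_one]

lemma isCoalgHom_assoc :
    IsCoalgHom ((TensorProduct.assoc k C D E).toLinearMap) := by
  refine ⟨?_, ?_⟩
  · exact ((Coalgebra.TensorProduct.assoc k k C D E).map_comp_comul).symm
  · exact (Coalgebra.TensorProduct.assoc k k C D E).counit_comp

end AuxTensor
section AuxBialg

open Coalgebra

lemma isCoalgHom_id {C : Type u} [AddCommGroup C] [Module k C] [Coalgebra k C] :
    IsCoalgHom (LinearMap.id : C →ₗ[k] C) := by
  constructor
  · rw [TensorProduct.map_id]; rfl
  · rfl

lemma sum_mul_linear {M : Type u} [AddCommGroup M] [Module k M] {ι : Type*} (s : Finset ι)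
    (w : ι → k) (g : ι → M) (L : M →ₗ[k] k) :
    ∑ i ∈ s, w i * L (g i) = L (∑ i ∈ s, w i • g i) := by
  rw [map_sum]
  exact Finset.sum_congr rfl fun i _ => by rw [map_smul, smul_eq_mul]

variable {A : Type u} [Ring A] [Bialgebra k A]

lemma comul_one_tmul : Coalgebra.comul (R := k) (1 : A) = (1 : A) ⊗ₜ[k] 1 := by
  rw [Bialgebra.comul_one, Algebra.TensorProduct.one_def]

lemma isCoalgHom_mul' : IsCoalgHom (LinearMap.mul' k A) := by
  constructor
  · apply TensorProduct.ext'
    intro a b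
    simp only [LinearMap.comp_apply, LinearMap.mul'_apply, Bialgebra.comul_mul]
    rw [comul_tmul_repr a b (ℛ k a) (ℛ k b)]
    simp only [map_sum, TensorProduct.map_tmul, LinearMap.mul'_apply]
    rw [← (ℛ k a).eq, ← (ℛ k b).eq, Finset.sum_mul_sum]
    simp only [Algebra.TensorProduct.tmul_mul_tmul]
  · apply TensorProduct.ext'
    intro a b
    simp only [LinearMap.comp_apply, LinearMap.mul'_apply, Bialgebra.counit_mul, _root_.counit_tmul]

/-- The four "structure maps" `(A ⊗ A) ⊗ A → A ⊗ A` entering the cocycle identity. -/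
noncomputable def phi1 : (A ⊗[k] A) ⊗[k] A →ₗ[k] A ⊗[k] A := epsR

noncomputable def phi2 : (A ⊗[k] A) ⊗[k] A →ₗ[k] A ⊗[k] A :=
  TensorProduct.map (LinearMap.mul' k A) LinearMap.id

noncomputable def phi3 : (A ⊗[k] A) ⊗[k] A →ₗ[k] A ⊗[k] A :=
  epsL ∘ₗ (TensorProduct.assoc k A A A).toLinearMap

noncomputable def phi4 : (A ⊗[k] A) ⊗[k] A →ₗ[k] A ⊗[k] A :=
  TensorProduct.map LinearMap.id (LinearMap.mul' k A) ∘ₗ (TensorProduct.assoc k A A A).toLinearMap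

@[simp] lemma phi1_tmul (x y z : A) :
    phi1 ((x ⊗ₜ[k] y) ⊗ₜ[k] z) = Coalgebra.counit (R := k) z • (x ⊗ₜ[k] y) := by
  simp [phi1]

@[simp] lemma phi2_tmul (x y z : A) : phi2 (k := k) ((x ⊗ₜ[k] y) ⊗ₜ[k] z) = (x * y) ⊗ₜ[k] z := by
  simp [phi2]

@[simp] lemma phi3_tmul (x y z : A) :
    phi3 ((x ⊗ₜ[k] y) ⊗ₜ[k] z) = Coalgebra.counit (R := k) x • (y ⊗ₜ[k] z) := by
  simp [phi3]

@[simp] lemma phi4_tmul (x y z : A) : phi4 (k := k) ((x ⊗ₜ[k] y) ⊗ₜ[k] z) = x ⊗ₜ[k] (y * z) := by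
  simp [phi4]

lemma isCoalgHom_phi1 : IsCoalgHom (phi1 : (A ⊗[k] A) ⊗[k] A →ₗ[k] A ⊗[k] A) := isCoalgHom_epsR

lemma isCoalgHom_phi2 : IsCoalgHom (phi2 : (A ⊗[k] A) ⊗[k] A →ₗ[k] A ⊗[k] A) :=
  IsCoalgHom.map isCoalgHom_mul' isCoalgHom_id

lemma isCoalgHom_phi3 : IsCoalgHom (phi3 : (A ⊗[k] A) ⊗[k] A →ₗ[k] A ⊗[k] A) :=
  IsCoalgHom.comp isCoalgHom_epsL isCoalgHom_assoc

lemma isCoalgHom_phi4 : IsCoalgHom (phi4 : (A ⊗[k] A) ⊗[k] A →ₗ[k] A ⊗[k] A) :=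
  IsCoalgHom.comp (IsCoalgHom.map isCoalgHom_id isCoalgHom_mul') isCoalgHom_assoc

lemma F1_eq (σ : A ⊗[k] A →ₗ[k] k) :
    LinearMap.mul' k k ∘ₗ TensorProduct.map σ Coalgebra.counit = σ ∘ₗ phi1 := by
  apply TensorProduct.ext'
  intro w z
  simp only [LinearMap.comp_apply, TensorProduct.map_tmul, LinearMap.mul'_apply, phi1, epsR_tmul,
    map_smul, smul_eq_mul]
  exact mul_comm _ _

lemma F2_eq (σ : A ⊗[k] A →ₗ[k] k) :
    σ ∘ₗ TensorProduct.map (LinearMap.mul' k A) LinearMap.id = σ ∘ₗ phi2 := rfl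

lemma G1_eq (σ : A ⊗[k] A →ₗ[k] k) :
    (LinearMap.mul' k k ∘ₗ TensorProduct.map Coalgebra.counit σ) ∘ₗ
      (TensorProduct.assoc k A A A).toLinearMap = σ ∘ₗ phi3 := by
  apply TensorProduct.ext'
  intro w z
  induction w using TensorProduct.induction_on with
  | zero => simp only [TensorProduct.zero_tmul, map_zero]
  | tmul x y =>
    simp only [LinearMap.comp_apply, LinearEquiv.coe_coe, TensorProduct.assoc_tmul,
      TensorProduct.map_tmul, LinearMap.mul'_apply, phi3, epsL_tmul, map_smul, smul_eq_mul]
  | add u v hu hv =>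
    simp only [TensorProduct.add_tmul, map_add] at hu hv ⊢
    rw [hu, hv]

lemma G2_eq (σ : A ⊗[k] A →ₗ[k] k) :
    σ ∘ₗ TensorProduct.map LinearMap.id (LinearMap.mul' k A) ∘ₗ
      (TensorProduct.assoc k A A A).toLinearMap = σ ∘ₗ phi4 := by
  rw [phi4, ← LinearMap.comp_assoc]

lemma isCocycle_iff (σ : A ⊗[k] A →ₗ[k] k) :
    IsCocycle σ ↔ conv (σ ∘ₗ phi1) (σ ∘ₗ phi2) = conv (σ ∘ₗ phi3) (σ ∘ₗ phi4) := by
  unfold IsCocycle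
  rw [F1_eq, F2_eq, G1_eq, G2_eq]

end AuxBialg
section AuxUnital

open Coalgebra

variable {A : Type u} [Ring A] [Bialgebra k A]

lemma isCoalgHom_iota2 : IsCoalgHom (TensorProduct.mk k A A 1) :=
  isCoalgHom_mkL 1 comul_one_tmul Bialgebra.counit_one

lemma isCoalgHom_iota1 : IsCoalgHom ((TensorProduct.mk k A A).flip 1) :=
  isCoalgHom_mkR 1 comul_one_tmul Bialgebra.counit_one

lemma comul_oneone :
    Coalgebra.comul (R := k) ((1 : A) ⊗ₜ[k] (1 : A)) =
      ((1 : A) ⊗ₜ[k] (1 : A)) ⊗ₜ[k] ((1 : A) ⊗ₜ[k] (1 : A)) := by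
  have h0 : Coalgebra.comul (R := k) ((1 : A) ⊗ₜ[k] (1 : A)) =
      (TensorProduct.tensorTensorTensorComm k A A A A)
        (Coalgebra.comul (R := k) (1 : A) ⊗ₜ[k] Coalgebra.comul (R := k) (1 : A)) := rfl
  rw [h0, comul_one_tmul]
  simp

lemma counit_oneone : Coalgebra.counit (R := k) ((1 : A) ⊗ₜ[k] (1 : A)) = 1 := by
  rw [_root_.counit_tmul, Bialgebra.counit_one, one_mul]

lemma isCoalgHom_psi : IsCoalgHom (TensorProduct.mk k (A ⊗[k] A) A ((1 : A) ⊗ₜ[k] 1)) :=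
  isCoalgHom_mkL _ comul_oneone counit_oneone

lemma isCoalgHom_psi' :
    IsCoalgHom (((TensorProduct.mk k (A ⊗[k] A) A).flip 1) ∘ₗ ((TensorProduct.mk k A A).flip 1)) :=
  (isCoalgHom_mkR 1 comul_one_tmul Bialgebra.counit_one).comp isCoalgHom_iota1

variable {ρ ρinv : A ⊗[k] A →ₗ[k] k}

set_option maxHeartbeats 2000000 in
lemma unital_all (hρinv : conv ρ ρinv = Coalgebra.counit) (hρ1 : ρ ((1 : A) ⊗ₜ[k] 1) = 1)
    (hρ : IsCocycle ρ) :
    ρ ∘ₗ TensorProduct.mk k A A 1 = Coalgebra.counit ∧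
    ρ ∘ₗ (TensorProduct.mk k A A).flip 1 = Coalgebra.counit ∧
    ρinv ∘ₗ TensorProduct.mk k A A 1 = Coalgebra.counit ∧
    ρinv ∘ₗ (TensorProduct.mk k A A).flip 1 = Coalgebra.counit := by
  have hcoc := (isCocycle_iff ρ).1 hρ
  -- left unitality
  have hfg : conv (ρ ∘ₗ TensorProduct.mk k A A 1) (ρinv ∘ₗ TensorProduct.mk k A A 1)
      = Coalgebra.counit := by
    refine (conv_comp ρ ρinv _ isCoalgHom_iota2.1).symm.trans ?_
    rw [hρinv]; exact isCoalgHom_iota2.2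
  have key0 := congrArg (fun t : (A ⊗[k] A) ⊗[k] A →ₗ[k] k =>
      t ∘ₗ TensorProduct.mk k (A ⊗[k] A) A ((1 : A) ⊗ₜ[k] 1)) hcoc
  have key := ((conv_comp (ρ ∘ₗ phi1) (ρ ∘ₗ phi2) _ isCoalgHom_psi.1).symm.trans key0).trans
      (conv_comp (ρ ∘ₗ phi3) (ρ ∘ₗ phi4) _ isCoalgHom_psi.1)
  have c1 : (ρ ∘ₗ phi1) ∘ₗ TensorProduct.mk k (A ⊗[k] A) A ((1 : A) ⊗ₜ[k] 1)
      = Coalgebra.counit := by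
    ext x
    simp [phi1_tmul, map_smul, smul_eq_mul, hρ1]
  have c2 : (ρ ∘ₗ phi2) ∘ₗ TensorProduct.mk k (A ⊗[k] A) A ((1 : A) ⊗ₜ[k] 1)
      = ρ ∘ₗ TensorProduct.mk k A A 1 := by
    ext x; simp [phi2_tmul]
  have c3 : (ρ ∘ₗ phi3) ∘ₗ TensorProduct.mk k (A ⊗[k] A) A ((1 : A) ⊗ₜ[k] 1)
      = ρ ∘ₗ TensorProduct.mk k A A 1 := by
    ext x; simp [phi3_tmul, Bialgebra.counit_one]
  have c4 : (ρ ∘ₗ phi4) ∘ₗ TensorProduct.mk k (A ⊗[k] A) A ((1 : A) ⊗ₜ[k] 1)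
      = ρ ∘ₗ TensorProduct.mk k A A 1 := by
    ext x; simp [phi4_tmul]
  rw [c1, c2, c3, c4, counit_conv] at key
  have hf : ρ ∘ₗ TensorProduct.mk k A A 1 = Coalgebra.counit :=
    conv_idem_eq_counit key.symm hfg
  have hg : ρinv ∘ₗ TensorProduct.mk k A A 1 = Coalgebra.counit := by
    calc ρinv ∘ₗ TensorProduct.mk k A A 1
        = conv Coalgebra.counit (ρinv ∘ₗ TensorProduct.mk k A A 1) := (counit_conv _).symm
      _ = conv (ρ ∘ₗ TensorProduct.mk k A A 1) (ρinv ∘ₗ TensorProduct.mk k A A 1) := by rw [hf]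
      _ = Coalgebra.counit := hfg
  -- right unitality
  have hfg' : conv (ρ ∘ₗ (TensorProduct.mk k A A).flip 1)
      (ρinv ∘ₗ (TensorProduct.mk k A A).flip 1) = Coalgebra.counit := by
    refine (conv_comp ρ ρinv _ isCoalgHom_iota1.1).symm.trans ?_
    rw [hρinv]; exact isCoalgHom_iota1.2
  have key0' := congrArg (fun t : (A ⊗[k] A) ⊗[k] A →ₗ[k] k =>
      t ∘ₗ (((TensorProduct.mk k (A ⊗[k] A) A).flip 1) ∘ₗ
        ((TensorProduct.mk k A A).flip 1))) hcoc
  have key' := ((conv_comp (ρ ∘ₗ phi1) (ρ ∘ₗ phi2) _ isCoalgHom_psi'.1).symm.trans key0').trans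
      (conv_comp (ρ ∘ₗ phi3) (ρ ∘ₗ phi4) _ isCoalgHom_psi'.1)
  have d1 : (ρ ∘ₗ phi1) ∘ₗ (((TensorProduct.mk k (A ⊗[k] A) A).flip 1) ∘ₗ
      ((TensorProduct.mk k A A).flip 1)) = ρ ∘ₗ (TensorProduct.mk k A A).flip 1 := by
    ext x; simp [phi1_tmul, Bialgebra.counit_one]
  have d2 : (ρ ∘ₗ phi2) ∘ₗ (((TensorProduct.mk k (A ⊗[k] A) A).flip 1) ∘ₗ
      ((TensorProduct.mk k A A).flip 1)) = ρ ∘ₗ (TensorProduct.mk k A A).flip 1 := by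
    ext x; simp [phi2_tmul]
  have d3 : (ρ ∘ₗ phi3) ∘ₗ (((TensorProduct.mk k (A ⊗[k] A) A).flip 1) ∘ₗ
      ((TensorProduct.mk k A A).flip 1)) = Coalgebra.counit := by
    ext x; simp [phi3_tmul, map_smul, smul_eq_mul, hρ1]
  have d4 : (ρ ∘ₗ phi4) ∘ₗ (((TensorProduct.mk k (A ⊗[k] A) A).flip 1) ∘ₗ
      ((TensorProduct.mk k A A).flip 1)) = ρ ∘ₗ (TensorProduct.mk k A A).flip 1 := by
    ext x; simp [phi4_tmul]
  rw [d1, d2, d3, d4, counit_conv] at key'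
  have hh : ρ ∘ₗ (TensorProduct.mk k A A).flip 1 = Coalgebra.counit :=
    conv_idem_eq_counit key' hfg'
  have hh' : ρinv ∘ₗ (TensorProduct.mk k A A).flip 1 = Coalgebra.counit := by
    calc ρinv ∘ₗ (TensorProduct.mk k A A).flip 1
        = conv Coalgebra.counit (ρinv ∘ₗ (TensorProduct.mk k A A).flip 1) := (counit_conv _).symm
      _ = conv (ρ ∘ₗ (TensorProduct.mk k A A).flip 1)
            (ρinv ∘ₗ (TensorProduct.mk k A A).flip 1) := by rw [hh]
      _ = Coalgebra.counit := hfg'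
  exact ⟨hf, hh, hg, hh'⟩

set_option maxHeartbeats 2000000 in
lemma reversed_cocycle (hρinv1 : conv ρ ρinv = Coalgebra.counit)
    (hρinv2 : conv ρinv ρ = Coalgebra.counit) (hρ : IsCocycle ρ) :
    conv (ρinv ∘ₗ phi2) (ρinv ∘ₗ phi1) = conv (ρinv ∘ₗ phi4) (ρinv ∘ₗ phi3) := by
  have hcoc := (isCocycle_iff ρ).1 hρ
  have i1 : conv (ρ ∘ₗ phi1) (ρinv ∘ₗ phi1) = Coalgebra.counit := by
    refine (conv_comp ρ ρinv _ isCoalgHom_phi1.1).symm.trans ?_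
    rw [hρinv1]; exact isCoalgHom_phi1.2
  have i2 : conv (ρ ∘ₗ phi2) (ρinv ∘ₗ phi2) = Coalgebra.counit := by
    refine (conv_comp ρ ρinv _ isCoalgHom_phi2.1).symm.trans ?_
    rw [hρinv1]; exact isCoalgHom_phi2.2
  have i3 : conv (ρinv ∘ₗ phi3) (ρ ∘ₗ phi3) = Coalgebra.counit := by
    refine (conv_comp ρinv ρ _ isCoalgHom_phi3.1).symm.trans ?_
    rw [hρinv2]; exact isCoalgHom_phi3.2
  have i4 : conv (ρinv ∘ₗ phi4) (ρ ∘ₗ phi4) = Coalgebra.counit := by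
    refine (conv_comp ρinv ρ _ isCoalgHom_phi4.1).symm.trans ?_
    rw [hρinv2]; exact isCoalgHom_phi4.2
  have claim1 : conv (conv (ρ ∘ₗ phi1) (ρ ∘ₗ phi2))
      (conv (ρinv ∘ₗ phi2) (ρinv ∘ₗ phi1)) = Coalgebra.counit := by
    rw [conv_assoc, ← conv_assoc (ρ ∘ₗ phi2) (ρinv ∘ₗ phi2) (ρinv ∘ₗ phi1), i2, counit_conv, i1]
  have claim2 : conv (conv (ρinv ∘ₗ phi4) (ρinv ∘ₗ phi3))
      (conv (ρ ∘ₗ phi3) (ρ ∘ₗ phi4)) = Coalgebra.counit := by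
    rw [conv_assoc, ← conv_assoc (ρinv ∘ₗ phi3) (ρ ∘ₗ phi3) (ρ ∘ₗ phi4), i3, counit_conv, i4]
  have h2 : conv (conv (ρinv ∘ₗ phi4) (ρinv ∘ₗ phi3))
      (conv (ρ ∘ₗ phi1) (ρ ∘ₗ phi2)) = Coalgebra.counit := by
    rw [hcoc]; exact claim2
  exact (conv_inv_unique claim1 h2).symm

end AuxUnital
section AuxVanish

open Coalgebra

variable {A : Type u} [Ring A] [Bialgebra k A]

lemma collapse_left {ι : Type*} (L : A ⊗[k] A →ₗ[k] k) (s : Finset ι) (w : ι → k) (g : ι → A)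
    (b : A) : ∑ i ∈ s, w i * L (g i ⊗ₜ[k] b) = L ((∑ i ∈ s, w i • g i) ⊗ₜ[k] b) := by
  rw [sum_mul_linear s w (fun i => g i ⊗ₜ[k] b) L]
  congr 1
  simp only [TensorProduct.sum_tmul, TensorProduct.smul_tmul']

lemma collapse_right {ι : Type*} (L : A ⊗[k] A →ₗ[k] k) (s : Finset ι) (w : ι → k) (g : ι → A)
    (b : A) : ∑ i ∈ s, w i * L (b ⊗ₜ[k] g i) = L (b ⊗ₜ[k] (∑ i ∈ s, w i • g i)) := by
  rw [sum_mul_linear s w (fun i => b ⊗ₜ[k] g i) L]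
  congr 1
  simp only [TensorProduct.tmul_sum, TensorProduct.tmul_smul]

/-- Build a `Repr` of `y` from a representative of `comul y` inside `K ⊗ K`. -/
lemma exists_repr_in (K : Subalgebra k A) {y : A} (hy : Coalgebra.comul (R := k) y ∈
      LinearMap.range (TensorProduct.map (Subalgebra.val K).toLinearMap
        (Subalgebra.val K).toLinearMap)) :
    ∃ (s : Finset (K × K)), Coalgebra.comul (R := k) y
        = ∑ p ∈ s, (p.1 : A) ⊗ₜ[k] (p.2 : A) := by
  obtain ⟨t, ht⟩ := hy
  obtain ⟨s, hs⟩ := TensorProduct.exists_finset (R := k) t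
  refine ⟨s, ?_⟩
  rw [← ht, hs]
  simp only [map_sum, TensorProduct.map_tmul]
  rfl

set_option maxHeartbeats 2000000 in
lemma rhoinv_vanish (K : Subalgebra k A)
    (hcentral : ∀ x ∈ K, ∀ a : A, x * a = a * x)
    (hsub : ∀ x ∈ K, Coalgebra.comul (R := k) x ∈
      LinearMap.range (TensorProduct.map (Subalgebra.val K).toLinearMap
        (Subalgebra.val K).toLinearMap))
    (ρ ρinv : A ⊗[k] A →ₗ[k] k)
    (hρinv : conv ρ ρinv = Coalgebra.counit ∧ conv ρinv ρ = Coalgebra.counit)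
    (hρ1 : ρ ((1 : A) ⊗ₜ[k] (1 : A)) = 1)
    (hρ : IsCocycle ρ)
    (hvan0 : ∀ w ∈ Ideal.span {y : A | y ∈ K ∧ Coalgebra.counit (R := k) y = 0},
      ∀ a : A, ρ (a ⊗ₜ[k] w) = 0 ∧ ρ (w ⊗ₜ[k] a) = 0) :
    ∀ x ∈ Ideal.span {y : A | y ∈ K ∧ Coalgebra.counit (R := k) y = 0},
      ∀ c : A, ρinv (c ⊗ₜ[k] x) = 0 ∧ ρinv (x ⊗ₜ[k] c) = 0 := by
  set S := {y : A | y ∈ K ∧ Coalgebra.counit (R := k) y = 0} with hS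
  obtain ⟨u1, u2, u3, u4⟩ := unital_all hρinv.1 hρ1 hρ
  have hρ_one_l : ∀ x : A, ρ ((1 : A) ⊗ₜ[k] x) = Coalgebra.counit (R := k) x :=
    fun x => LinearMap.congr_fun u1 x
  have hρ_one_r : ∀ x : A, ρ (x ⊗ₜ[k] (1 : A)) = Coalgebra.counit (R := k) x :=
    fun x => LinearMap.congr_fun u2 x
  have hinv_one_l : ∀ x : A, ρinv ((1 : A) ⊗ₜ[k] x) = Coalgebra.counit (R := k) x :=
    fun x => LinearMap.congr_fun u3 x
  have hinv_one_r : ∀ x : A, ρinv (x ⊗ₜ[k] (1 : A)) = Coalgebra.counit (R := k) x :=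
    fun x => LinearMap.congr_fun u4 x
  have hKmem : ∀ v : A, v ∈ K → (v - Coalgebra.counit (R := k) v • (1 : A)) ∈ S := by
    intro v hv
    refine ⟨sub_mem hv (K.smul_mem K.one_mem _), ?_⟩
    simp [map_sub, map_smul, Bialgebra.counit_one]
  have hsplit_r : ∀ x v : A,
      x ⊗ₜ[k] v = x ⊗ₜ[k] (v - Coalgebra.counit (R := k) v • (1 : A)) +
        Coalgebra.counit (R := k) v • (x ⊗ₜ[k] (1 : A)) := by
    intro x v
    rw [TensorProduct.tmul_sub, TensorProduct.tmul_smul]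
    abel
  have hsplit_l : ∀ x v : A,
      v ⊗ₜ[k] x = (v - Coalgebra.counit (R := k) v • (1 : A)) ⊗ₜ[k] x +
        Coalgebra.counit (R := k) v • ((1 : A) ⊗ₜ[k] x) := by
    intro x v
    rw [TensorProduct.sub_tmul, TensorProduct.smul_tmul']
    abel
  have hva_r : ∀ x v : A, v ∈ K →
      ρ (x ⊗ₜ[k] v) = Coalgebra.counit (R := k) v * Coalgebra.counit (R := k) x := by
    intro x v hv
    rw [hsplit_r x v, map_add, map_smul,
      (hvan0 _ (Ideal.subset_span (hKmem v hv)) x).1, zero_add, hρ_one_r x, smul_eq_mul]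
  have hva_l : ∀ x v : A, v ∈ K →
      ρ (v ⊗ₜ[k] x) = Coalgebra.counit (R := k) v * Coalgebra.counit (R := k) x := by
    intro x v hv
    rw [hsplit_l x v, map_add, map_smul,
      (hvan0 _ (Ideal.subset_span (hKmem v hv)) x).2, zero_add, hρ_one_l x, smul_eq_mul]
  -- base case, right slot
  have base1 : ∀ y : A, y ∈ K → Coalgebra.counit (R := k) y = 0 →
      ∀ a : A, ρinv (a ⊗ₜ[k] y) = 0 := by
    intro y hyK hyε a
    obtain ⟨s, hs⟩ := exists_repr_in K (hsub y hyK)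
    set ry : Coalgebra.Repr k y (K × K) :=
      ⟨s, fun p => ((p.1 : A)), fun p => ((p.2 : A)), hs.symm⟩ with hry
    set ra := ℛ k a with hra
    have h0 : conv ρinv ρ (a ⊗ₜ[k] y) = 0 := by
      rw [hρinv.2, _root_.counit_tmul, hyε, mul_zero]
    rw [conv_apply_tmul ρinv ρ a y ra ry, Finset.sum_comm] at h0
    have hcol : ∀ p ∈ ry.index,
        ∑ i ∈ ra.index, ρinv (ra.left i ⊗ₜ[k] ry.left p) * ρ (ra.right i ⊗ₜ[k] ry.right p)
          = Coalgebra.counit (R := k) (ry.right p) * ρinv (a ⊗ₜ[k] ry.left p) := by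
      intro p _
      have e1 : ∀ i ∈ ra.index,
          ρinv (ra.left i ⊗ₜ[k] ry.left p) * ρ (ra.right i ⊗ₜ[k] ry.right p)
            = Coalgebra.counit (R := k) (ry.right p) *
              (Coalgebra.counit (R := k) (ra.right i) * ρinv (ra.left i ⊗ₜ[k] ry.left p)) := by
        intro i _
        rw [hva_r _ _ (SetLike.coe_mem p.2)]
        ring
      rw [Finset.sum_congr rfl e1, ← Finset.mul_sum,
        collapse_left ρinv ra.index (fun i => Coalgebra.counit (R := k) (ra.right i))
          (fun i => ra.left i) (ry.left p), repr_smul_left ra]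
    rw [Finset.sum_congr rfl hcol,
      collapse_right ρinv ry.index (fun p => Coalgebra.counit (R := k) (ry.right p))
        (fun p => ry.left p) a, repr_smul_left ry] at h0
    exact h0
  -- base case, left slot
  have base2 : ∀ y : A, y ∈ K → Coalgebra.counit (R := k) y = 0 →
      ∀ a : A, ρinv (y ⊗ₜ[k] a) = 0 := by
    intro y hyK hyε a
    obtain ⟨s, hs⟩ := exists_repr_in K (hsub y hyK)
    set ry : Coalgebra.Repr k y (K × K) :=
      ⟨s, fun p => ((p.1 : A)), fun p => ((p.2 : A)), hs.symm⟩ with hry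
    set ra := ℛ k a with hra
    have h0 : conv ρ ρinv (y ⊗ₜ[k] a) = 0 := by
      rw [hρinv.1, _root_.counit_tmul, hyε, zero_mul]
    rw [conv_apply_tmul ρ ρinv y a ry ra] at h0
    have hcol : ∀ p ∈ ry.index,
        ∑ i ∈ ra.index, ρ (ry.left p ⊗ₜ[k] ra.left i) * ρinv (ry.right p ⊗ₜ[k] ra.right i)
          = Coalgebra.counit (R := k) (ry.left p) * ρinv (ry.right p ⊗ₜ[k] a) := by
      intro p _
      have e1 : ∀ i ∈ ra.index,
          ρ (ry.left p ⊗ₜ[k] ra.left i) * ρinv (ry.right p ⊗ₜ[k] ra.right i)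
            = Coalgebra.counit (R := k) (ry.left p) *
              (Coalgebra.counit (R := k) (ra.left i) * ρinv (ry.right p ⊗ₜ[k] ra.right i)) := by
        intro i _
        rw [hva_l _ _ (SetLike.coe_mem p.1)]
        ring
      rw [Finset.sum_congr rfl e1, ← Finset.mul_sum,
        collapse_right ρinv ra.index (fun i => Coalgebra.counit (R := k) (ra.left i))
          (fun i => ra.right i) (ry.right p), repr_smul_right ra]
    rw [Finset.sum_congr rfl hcol,
      collapse_left ρinv ry.index (fun p => Coalgebra.counit (R := k) (ry.left p))
        (fun p => ry.right p) a, repr_smul_right ry] at h0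
    exact h0
  -- ρinv on `K` in either slot
  have hinva_r : ∀ x v : A, v ∈ K →
      ρinv (x ⊗ₜ[k] v) = Coalgebra.counit (R := k) v * Coalgebra.counit (R := k) x := by
    intro x v hv
    rw [hsplit_r x v, map_add, map_smul,
      base1 _ (hKmem v hv).1 (hKmem v hv).2 x, zero_add, hinv_one_r x, smul_eq_mul]
  have hinva_l : ∀ x v : A, v ∈ K →
      ρinv (v ⊗ₜ[k] x) = Coalgebra.counit (R := k) v * Coalgebra.counit (R := k) x := by
    intro x v hv
    rw [hsplit_l x v, map_add, map_smul,
      base2 _ (hKmem v hv).1 (hKmem v hv).2 x, zero_add, hinv_one_l x, smul_eq_mul]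
  -- the reversed cocycle identity
  have RC := reversed_cocycle hρinv.1 hρinv.2 hρ
  -- step 1 : ρinv (c ⊗ a y) = 0
  have step1 : ∀ y : A, y ∈ K → Coalgebra.counit (R := k) y = 0 →
      ∀ a c : A, ρinv (c ⊗ₜ[k] (a * y)) = 0 := by
    intro y hyK hyε a c
    obtain ⟨s, hs⟩ := exists_repr_in K (hsub y hyK)
    set ry : Coalgebra.Repr k y (K × K) :=
      ⟨s, fun p => ((p.1 : A)), fun p => ((p.2 : A)), hs.symm⟩ with hry
    set ra := ℛ k a with hra
    set rc := ℛ k c with hrc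
    have h0 := LinearMap.congr_fun RC ((c ⊗ₜ[k] a) ⊗ₜ[k] y)
    rw [conv_apply_tmul3 _ _ c a y rc ra ry, conv_apply_tmul3 _ _ c a y rc ra ry] at h0
    simp only [LinearMap.comp_apply, phi1_tmul, phi2_tmul, phi3_tmul, phi4_tmul, map_smul,
      smul_eq_mul] at h0
    have hL : ∀ i ∈ rc.index, ∀ j ∈ ra.index,
        (∑ m ∈ ry.index, ρinv ((rc.left i * ra.left j) ⊗ₜ[k] ry.left m) *
          (Coalgebra.counit (R := k) (ry.right m) * ρinv (rc.right i ⊗ₜ[k] ra.right j))) = 0 := by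
      intro i _ j _
      have e1 : ∀ m ∈ ry.index,
          ρinv ((rc.left i * ra.left j) ⊗ₜ[k] ry.left m) *
            (Coalgebra.counit (R := k) (ry.right m) * ρinv (rc.right i ⊗ₜ[k] ra.right j))
          = (Coalgebra.counit (R := k) (ry.right m) *
              ρinv ((rc.left i * ra.left j) ⊗ₜ[k] ry.left m)) *
            ρinv (rc.right i ⊗ₜ[k] ra.right j) := fun m _ => by ring
      rw [Finset.sum_congr rfl e1, ← Finset.sum_mul,
        collapse_right ρinv ry.index (fun m => Coalgebra.counit (R := k) (ry.right m))
          (fun m => ry.left m) (rc.left i * ra.left j), repr_smul_left ry,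
        base1 y hyK hyε _, zero_mul]
    have hR : ∀ i ∈ rc.index,
        (∑ j ∈ ra.index, ∑ m ∈ ry.index,
          ρinv (rc.left i ⊗ₜ[k] (ra.left j * ry.left m)) *
            (Coalgebra.counit (R := k) (rc.right i) * ρinv (ra.right j ⊗ₜ[k] ry.right m)))
          = Coalgebra.counit (R := k) (rc.right i) * ρinv (rc.left i ⊗ₜ[k] (a * y)) := by
      intro i _
      have e2 : ∀ j ∈ ra.index,
          (∑ m ∈ ry.index, ρinv (rc.left i ⊗ₜ[k] (ra.left j * ry.left m)) *
            (Coalgebra.counit (R := k) (rc.right i) * ρinv (ra.right j ⊗ₜ[k] ry.right m)))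
          = Coalgebra.counit (R := k) (rc.right i) * (Coalgebra.counit (R := k) (ra.right j) *
              ρinv (rc.left i ⊗ₜ[k] (ra.left j * y))) := by
        intro j _
        have e3 : ∀ m ∈ ry.index,
            ρinv (rc.left i ⊗ₜ[k] (ra.left j * ry.left m)) *
              (Coalgebra.counit (R := k) (rc.right i) * ρinv (ra.right j ⊗ₜ[k] ry.right m))
            = (Coalgebra.counit (R := k) (rc.right i) * Coalgebra.counit (R := k) (ra.right j)) *
                (Coalgebra.counit (R := k) (ry.right m) *
                  ρinv (rc.left i ⊗ₜ[k] (ra.left j * ry.left m))) := by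
          intro m _
          rw [hinva_r _ _ (SetLike.coe_mem _)]
          ring
        rw [Finset.sum_congr rfl e3, ← Finset.mul_sum,
          collapse_right ρinv ry.index (fun m => Coalgebra.counit (R := k) (ry.right m))
            (fun m => ra.left j * ry.left m) (rc.left i)]
        have e4 : (∑ m ∈ ry.index, Coalgebra.counit (R := k) (ry.right m) •
            (ra.left j * ry.left m)) = ra.left j * y := by
          rw [Finset.sum_congr rfl
            (fun m _ => (mul_smul_comm (Coalgebra.counit (R := k) (ry.right m))
              (ra.left j) (ry.left m)).symm), ← Finset.mul_sum, repr_smul_left ry]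
        rw [e4]
        ring
      rw [Finset.sum_congr rfl e2, ← Finset.mul_sum,
        collapse_right ρinv ra.index (fun j => Coalgebra.counit (R := k) (ra.right j))
          (fun j => ra.left j * y) (rc.left i)]
      have e5 : (∑ j ∈ ra.index, Coalgebra.counit (R := k) (ra.right j) • (ra.left j * y))
          = a * y := by
        rw [Finset.sum_congr rfl
          (fun j _ => (smul_mul_assoc (Coalgebra.counit (R := k) (ra.right j))
            (ra.left j) y).symm), ← Finset.sum_mul, repr_smul_left ra]
      rw [e5]
    have h1 : (0 : k) = ∑ i ∈ rc.index,
        Coalgebra.counit (R := k) (rc.right i) * ρinv (rc.left i ⊗ₜ[k] (a * y)) := by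
      rw [← Finset.sum_congr rfl hR, ← h0]
      exact (Finset.sum_eq_zero fun i hi => Finset.sum_eq_zero fun j hj => hL i hi j hj).symm
    rw [collapse_left ρinv rc.index (fun i => Coalgebra.counit (R := k) (rc.right i))
      (fun i => rc.left i) (a * y), repr_smul_left rc] at h1
    exact h1.symm
  -- step 2 : ρinv ((a y) ⊗ c) = 0
  have step2 : ∀ y : A, y ∈ K → Coalgebra.counit (R := k) y = 0 →
      ∀ a c : A, ρinv ((a * y) ⊗ₜ[k] c) = 0 := by
    intro y hyK hyε a c
    obtain ⟨s, hs⟩ := exists_repr_in K (hsub y hyK)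
    set ry : Coalgebra.Repr k y (K × K) :=
      ⟨s, fun p => ((p.1 : A)), fun p => ((p.2 : A)), hs.symm⟩ with hry
    set ra := ℛ k a with hra
    set rc := ℛ k c with hrc
    have h0 := LinearMap.congr_fun RC ((a ⊗ₜ[k] y) ⊗ₜ[k] c)
    rw [conv_apply_tmul3 _ _ a y c ra ry rc, conv_apply_tmul3 _ _ a y c ra ry rc] at h0
    simp only [LinearMap.comp_apply, phi1_tmul, phi2_tmul, phi3_tmul, phi4_tmul, map_smul,
      smul_eq_mul] at h0
    have hL : ∀ i ∈ ra.index,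
        (∑ m ∈ ry.index, ∑ j ∈ rc.index,
          ρinv ((ra.left i * ry.left m) ⊗ₜ[k] rc.left j) *
            (Coalgebra.counit (R := k) (rc.right j) * ρinv (ra.right i ⊗ₜ[k] ry.right m)))
        = Coalgebra.counit (R := k) (ra.right i) * ρinv ((ra.left i * y) ⊗ₜ[k] c) := by
      intro i _
      have e1 : ∀ m ∈ ry.index,
          (∑ j ∈ rc.index, ρinv ((ra.left i * ry.left m) ⊗ₜ[k] rc.left j) *
            (Coalgebra.counit (R := k) (rc.right j) * ρinv (ra.right i ⊗ₜ[k] ry.right m)))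
          = Coalgebra.counit (R := k) (ry.right m) *
              (Coalgebra.counit (R := k) (ra.right i) *
                ρinv ((ra.left i * ry.left m) ⊗ₜ[k] c)) := by
        intro m _
        have e0 : ∀ j ∈ rc.index,
            ρinv ((ra.left i * ry.left m) ⊗ₜ[k] rc.left j) *
              (Coalgebra.counit (R := k) (rc.right j) * ρinv (ra.right i ⊗ₜ[k] ry.right m))
            = (Coalgebra.counit (R := k) (rc.right j) *
                ρinv ((ra.left i * ry.left m) ⊗ₜ[k] rc.left j)) *
              ρinv (ra.right i ⊗ₜ[k] ry.right m) := fun j _ => by ring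
        rw [Finset.sum_congr rfl e0, ← Finset.sum_mul,
          collapse_right ρinv rc.index (fun j => Coalgebra.counit (R := k) (rc.right j))
            (fun j => rc.left j) (ra.left i * ry.left m), repr_smul_left rc,
          hinva_r _ _ (SetLike.coe_mem m.2)]
        ring
      have e2 : ∀ m ∈ ry.index,
          Coalgebra.counit (R := k) (ry.right m) * (Coalgebra.counit (R := k) (ra.right i) *
            ρinv ((ra.left i * ry.left m) ⊗ₜ[k] c))
          = Coalgebra.counit (R := k) (ra.right i) * (Coalgebra.counit (R := k) (ry.right m) *
            ρinv ((ra.left i * ry.left m) ⊗ₜ[k] c)) := fun m _ => by ring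
      rw [Finset.sum_congr rfl e1, Finset.sum_congr rfl e2, ← Finset.mul_sum,
        collapse_left ρinv ry.index (fun m => Coalgebra.counit (R := k) (ry.right m))
          (fun m => ra.left i * ry.left m) c]
      have e4 : (∑ m ∈ ry.index, Coalgebra.counit (R := k) (ry.right m) •
          (ra.left i * ry.left m)) = ra.left i * y := by
        rw [Finset.sum_congr rfl
          (fun m _ => (mul_smul_comm (Coalgebra.counit (R := k) (ry.right m))
            (ra.left i) (ry.left m)).symm), ← Finset.mul_sum, repr_smul_left ry]
      rw [e4]
    have hR : ∀ i ∈ ra.index,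
        (∑ m ∈ ry.index, ∑ j ∈ rc.index,
          ρinv (ra.left i ⊗ₜ[k] (ry.left m * rc.left j)) *
            (Coalgebra.counit (R := k) (ra.right i) * ρinv (ry.right m ⊗ₜ[k] rc.right j)))
        = Coalgebra.counit (R := k) (ra.right i) * ρinv (ra.left i ⊗ₜ[k] (y * c)) := by
      intro i _
      have e1 : ∀ m ∈ ry.index,
          (∑ j ∈ rc.index, ρinv (ra.left i ⊗ₜ[k] (ry.left m * rc.left j)) *
            (Coalgebra.counit (R := k) (ra.right i) * ρinv (ry.right m ⊗ₜ[k] rc.right j)))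
          = Coalgebra.counit (R := k) (ry.right m) *
              (Coalgebra.counit (R := k) (ra.right i) *
                ρinv (ra.left i ⊗ₜ[k] (ry.left m * c))) := by
        intro m _
        have e0 : ∀ j ∈ rc.index,
            ρinv (ra.left i ⊗ₜ[k] (ry.left m * rc.left j)) *
              (Coalgebra.counit (R := k) (ra.right i) * ρinv (ry.right m ⊗ₜ[k] rc.right j))
            = (Coalgebra.counit (R := k) (ra.right i) * Coalgebra.counit (R := k) (ry.right m)) *
                (Coalgebra.counit (R := k) (rc.right j) *
                  ρinv (ra.left i ⊗ₜ[k] (ry.left m * rc.left j))) := by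
          intro j _
          rw [hinva_l _ _ (SetLike.coe_mem m.2)]
          ring
        rw [Finset.sum_congr rfl e0, ← Finset.mul_sum,
          collapse_right ρinv rc.index (fun j => Coalgebra.counit (R := k) (rc.right j))
            (fun j => ry.left m * rc.left j) (ra.left i)]
        have e4 : (∑ j ∈ rc.index, Coalgebra.counit (R := k) (rc.right j) •
            (ry.left m * rc.left j)) = ry.left m * c := by
          rw [Finset.sum_congr rfl
            (fun j _ => (mul_smul_comm (Coalgebra.counit (R := k) (rc.right j))
              (ry.left m) (rc.left j)).symm), ← Finset.mul_sum, repr_smul_left rc]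
        rw [e4]
        ring
      have e2 : ∀ m ∈ ry.index,
          Coalgebra.counit (R := k) (ry.right m) * (Coalgebra.counit (R := k) (ra.right i) *
            ρinv (ra.left i ⊗ₜ[k] (ry.left m * c)))
          = Coalgebra.counit (R := k) (ra.right i) * (Coalgebra.counit (R := k) (ry.right m) *
            ρinv (ra.left i ⊗ₜ[k] (ry.left m * c))) := fun m _ => by ring
      rw [Finset.sum_congr rfl e1, Finset.sum_congr rfl e2, ← Finset.mul_sum,
        collapse_right ρinv ry.index (fun m => Coalgebra.counit (R := k) (ry.right m))
          (fun m => ry.left m * c) (ra.left i)]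
      have e5 : (∑ m ∈ ry.index, Coalgebra.counit (R := k) (ry.right m) • (ry.left m * c))
          = y * c := by
        rw [Finset.sum_congr rfl
          (fun m _ => (smul_mul_assoc (Coalgebra.counit (R := k) (ry.right m))
            (ry.left m) c).symm), ← Finset.sum_mul, repr_smul_left ry]
      rw [e5]
    rw [Finset.sum_congr rfl hL, Finset.sum_congr rfl hR,
      collapse_left ρinv ra.index (fun i => Coalgebra.counit (R := k) (ra.right i))
        (fun i => ra.left i * y) c,
      collapse_left ρinv ra.index (fun i => Coalgebra.counit (R := k) (ra.right i))
        (fun i => ra.left i) (y * c), repr_smul_left ra] at h0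
    have e6 : (∑ i ∈ ra.index, Coalgebra.counit (R := k) (ra.right i) • (ra.left i * y))
        = a * y := by
      rw [Finset.sum_congr rfl
        (fun i _ => (smul_mul_assoc (Coalgebra.counit (R := k) (ra.right i))
          (ra.left i) y).symm), ← Finset.sum_mul, repr_smul_left ra]
    rw [e6, hcentral y hyK c] at h0
    rw [h0]
    exact step1 y hyK hyε c a
  -- conclude by a double span-induction
  intro x hx
  have hxN : x ∈ Submodule.span k {z : A | ∃ a : A, ∃ y ∈ S, z = a * y} := by
    have hmap : ∀ b : A, Submodule.map (LinearMap.mulLeft k b)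
        (Submodule.span k {z : A | ∃ a : A, ∃ y ∈ S, z = a * y}) ≤
        Submodule.span k {z : A | ∃ a : A, ∃ y ∈ S, z = a * y} := by
      intro b
      rw [Submodule.map_span]
      apply Submodule.span_le.2
      rintro _ ⟨z, ⟨a, y, hy, rfl⟩, rfl⟩
      refine Submodule.subset_span ⟨b * a, y, hy, ?_⟩
      rw [LinearMap.mulLeft_apply, mul_assoc]
    refine Submodule.span_induction (R := A) ?_ ?_ ?_ ?_ hx
    · intro z hz
      exact Submodule.subset_span ⟨1, z, hz, (one_mul z).symm⟩
    · exact Submodule.zero_mem _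
    · intro _ _ _ _ h1 h2
      exact Submodule.add_mem _ h1 h2
    · intro b z _ hz
      simpa [smul_eq_mul] using hmap b ⟨z, hz, rfl⟩
  refine Submodule.span_induction ?_ ?_ ?_ ?_ hxN
  · rintro z ⟨a, y, hy, rfl⟩ c
    exact ⟨step1 y hy.1 hy.2 a c, step2 y hy.1 hy.2 a c⟩
  · intro c
    simp
  · intro z w _ _ hz hw c
    constructor
    · rw [TensorProduct.tmul_add, map_add, (hz c).1, (hw c).1, add_zero]
    · rw [TensorProduct.add_tmul, map_add, (hz c).2, (hw c).2, add_zero]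
  · intro r z _ hz c
    constructor
    · rw [TensorProduct.tmul_smul, map_smul, (hz c).1, smul_zero]
    · rw [← TensorProduct.smul_tmul', map_smul, (hz c).2, smul_zero]

end AuxVanish
section AuxConvLR

open Coalgebra

variable {C D B B' : Type u} [AddCommGroup C] [Module k C] [Coalgebra k C]
  [AddCommGroup D] [Module k D] [Coalgebra k D]
  [Ring B] [Algebra k B] [Ring B'] [Algebra k B']

lemma convL_apply (σ : C →ₗ[k] k) (μ : C →ₗ[k] B) (z : C) {ι_r : Type*} (r : Coalgebra.Repr k z ι_r) :
    convL σ μ z = ∑ i ∈ r.index, σ (r.left i) • μ (r.right i) := by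
  simp only [convL, LinearMap.comp_apply, ← r.eq, map_sum, TensorProduct.map_tmul,
    LinearEquiv.coe_coe, TensorProduct.lid_tmul]

lemma convR_apply (μ : C →ₗ[k] B) (σ : C →ₗ[k] k) (z : C) {ι_r : Type*} (r : Coalgebra.Repr k z ι_r) :
    convR μ σ z = ∑ i ∈ r.index, σ (r.right i) • μ (r.left i) := by
  simp only [convR, LinearMap.comp_apply, ← r.eq, map_sum, TensorProduct.map_tmul,
    LinearEquiv.coe_coe, TensorProduct.rid_tmul]

/-- A `Repr` for the image of `z` under a comultiplication-compatible map. -/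
noncomputable def Coalgebra.Repr.push {z : C} {ι : Type*} (r : Coalgebra.Repr k z ι) (φ : C →ₗ[k] D)
    (hφ : Coalgebra.comul ∘ₗ φ = _root_.TensorProduct.map φ φ ∘ₗ Coalgebra.comul) :
    Coalgebra.Repr k (φ z) ι where
  index := r.index
  left := fun i => φ (r.left i)
  right := fun i => φ (r.right i)
  eq := by
    have := LinearMap.congr_fun hφ z
    simp only [LinearMap.comp_apply] at this
    rw [this, ← r.eq, map_sum]
    simp only [_root_.TensorProduct.map_tmul]

lemma convL_comp (σ : C →ₗ[k] k) (σ' : D →ₗ[k] k) (μ : C →ₗ[k] B) (μ' : D →ₗ[k] B')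
    (p : B →ₗ[k] B') (φ : C →ₗ[k] D)
    (hφ : Coalgebra.comul ∘ₗ φ = TensorProduct.map φ φ ∘ₗ Coalgebra.comul)
    (hσ : σ' ∘ₗ φ = σ) (hμ : p ∘ₗ μ = μ' ∘ₗ φ) :
    p ∘ₗ convL σ μ = convL σ' μ' ∘ₗ φ := by
  ext z
  set r := ℛ k z with hr
  rw [LinearMap.comp_apply, convL_apply σ μ z r, LinearMap.comp_apply,
    convL_apply σ' μ' (φ z) (r.push φ hφ)]
  rw [map_sum]
  refine Finset.sum_congr rfl fun i _ => ?_
  rw [map_smul]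
  have h1 : σ (r.left i) = σ' (φ (r.left i)) := (LinearMap.congr_fun hσ (r.left i)).symm
  have h2 : p (μ (r.right i)) = μ' (φ (r.right i)) := LinearMap.congr_fun hμ (r.right i)
  rw [h1, h2]
  rfl

lemma convR_comp (σ : C →ₗ[k] k) (σ' : D →ₗ[k] k) (μ : C →ₗ[k] B) (μ' : D →ₗ[k] B')
    (p : B →ₗ[k] B') (φ : C →ₗ[k] D)
    (hφ : Coalgebra.comul ∘ₗ φ = TensorProduct.map φ φ ∘ₗ Coalgebra.comul)
    (hσ : σ' ∘ₗ φ = σ) (hμ : p ∘ₗ μ = μ' ∘ₗ φ) :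
    p ∘ₗ convR μ σ = convR μ' σ' ∘ₗ φ := by
  ext z
  set r := ℛ k z with hr
  rw [LinearMap.comp_apply, convR_apply μ σ z r, LinearMap.comp_apply,
    convR_apply μ' σ' (φ z) (r.push φ hφ)]
  rw [map_sum]
  refine Finset.sum_congr rfl fun i _ => ?_
  rw [map_smul]
  have h1 : σ (r.right i) = σ' (φ (r.right i)) := (LinearMap.congr_fun hσ (r.right i)).symm
  have h2 : p (μ (r.left i)) = μ' (φ (r.left i)) := LinearMap.congr_fun hμ (r.left i)
  rw [h1, h2]
  rfl

end AuxConvLR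
theorem cocycle_descends_to_quotient {A Q : Type u} [Ring A] [Ring Q]
    [HopfAlgebra k A] [HopfAlgebra k Q]
    -- `K` is a central Hopf subalgebra of `A`
    (K : Subalgebra k A)
    (hcentral : ∀ x ∈ K, ∀ a : A, x * a = a * x)
    (hsub : ∀ x ∈ K, Coalgebra.comul (R := k) x ∈
      LinearMap.range (TensorProduct.map (Subalgebra.val K).toLinearMap (Subalgebra.val K).toLinearMap))
    -- `π : A → Q` is a surjective bialgebra map realising the quotient `A/AK⁺`
    (π : A →ₐ[k] Q) (hsurj : Function.Surjective π)
    (hπcomul : Coalgebra.comul (R := k) ∘ₗ π.toLinearMap =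
      TensorProduct.map π.toLinearMap π.toLinearMap ∘ₗ Coalgebra.comul (R := k))
    (hπcounit : Coalgebra.counit (R := k) ∘ₗ π.toLinearMap = Coalgebra.counit (R := k))
    (hker : RingHom.ker π.toRingHom =
      Ideal.span {y : A | y ∈ K ∧ Coalgebra.counit (R := k) y = 0})
    -- `ρ` is a convolution-invertible unital 2-cocycle on `A`
    (ρ ρinv : A ⊗[k] A →ₗ[k] k)
    (hρinv : conv ρ ρinv = Coalgebra.counit ∧ conv ρinv ρ = Coalgebra.counit)
    (hρ1 : ρ ((1 : A) ⊗ₜ[k] (1 : A)) = 1)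
    (hρ : IsCocycle ρ)
    -- `ρ` vanishes (in the convolution-trivial sense) on `A·K⁺·A`
    (hvan : ∀ a x : A,
      x ∈ Ideal.span {y : A | y ∈ K ∧ Coalgebra.counit (R := k) y = 0} →
      ρ (a ⊗ₜ[k] x) = Coalgebra.counit (R := k) a * Coalgebra.counit (R := k) x ∧
      ρ (x ⊗ₜ[k] a) = Coalgebra.counit (R := k) x * Coalgebra.counit (R := k) a) :
    -- `ρ` factors as `ρ' ∘ (π ⊗ π)` with `ρ'` a convolution-invertible unital
    -- 2-cocycle on `Q`, and `π : A_ρ → Q_{ρ'}` is a morphism for the deformed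
    -- multiplications, realising `(A/AK⁺)_{ρ'} ≅ A_ρ/AK⁺`
    ∃ ρ' ρ'inv : Q ⊗[k] Q →ₗ[k] k,
      ρ' ∘ₗ TensorProduct.map π.toLinearMap π.toLinearMap = ρ ∧
      conv ρ' ρ'inv = Coalgebra.counit ∧ conv ρ'inv ρ' = Coalgebra.counit ∧
      IsCocycle ρ' ∧ ρ' ((1 : Q) ⊗ₜ[k] (1 : Q)) = 1 ∧
      π.toLinearMap ∘ₗ deform ρ (LinearMap.mul' k A) ρinv =
        deform ρ' (LinearMap.mul' k Q) ρ'inv ∘ₗ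
          TensorProduct.map π.toLinearMap π.toLinearMap := by
  classical
  set S := {y : A | y ∈ K ∧ Coalgebra.counit (R := k) y = 0} with hSdef
  set πl := π.toLinearMap with hπl
  set q := TensorProduct.map πl πl with hqdef
  -- counit kills the ideal
  have hεI : ∀ x ∈ Ideal.span S, Coalgebra.counit (R := k) x = 0 := by
    intro x hx
    have hle : Ideal.span S ≤ RingHom.ker (Bialgebra.counitAlgHom k A).toRingHom :=
      Ideal.span_le.mpr fun y hy => by simpa using hy.2
    simpa using hle hx
  -- ρ kills the ideal
  have hvan0 : ∀ w ∈ Ideal.span S, ∀ a : A, ρ (a ⊗ₜ[k] w) = 0 ∧ ρ (w ⊗ₜ[k] a) = 0 := by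
    intro w hw a
    obtain ⟨h1, h2⟩ := hvan a w hw
    rw [hεI w hw, mul_zero] at h1
    rw [hεI w hw, zero_mul] at h2
    exact ⟨h1, h2⟩
  -- ρinv kills the ideal
  have hvinv := rhoinv_vanish K hcentral hsub ρ ρinv hρinv hρ1 hρ hvan0
  -- membership in terms of π
  have hmem : ∀ x : A, πl x = 0 → x ∈ Ideal.span S := by
    intro x h
    rw [← hker]
    exact RingHom.mem_ker.mpr h
  -- both ρ and ρinv kill the kernel of q
  have hkerq : ∀ L : A ⊗[k] A →ₗ[k] k,
      (∀ x : A, πl x = 0 → ∀ c : A, L (c ⊗ₜ[k] x) = 0 ∧ L (x ⊗ₜ[k] c) = 0) →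
      ∀ z ∈ LinearMap.ker q, L z = 0 := by
    intro L hL z hz
    have hker_eq : LinearMap.ker q =
        LinearMap.range (LinearMap.lTensor A (LinearMap.ker πl).subtype) ⊔
          LinearMap.range (LinearMap.rTensor A (LinearMap.ker πl).subtype) :=
      TensorProduct.map_ker (LinearMap.exact_subtype_ker_map πl) hsurj
        (LinearMap.exact_subtype_ker_map πl) hsurj
    rw [hker_eq] at hz
    obtain ⟨u, hu, v, hv, rfl⟩ := Submodule.mem_sup.mp hz
    obtain ⟨w, rfl⟩ := hu
    obtain ⟨w', rfl⟩ := hv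
    clear hz
    rw [map_add]
    have h1 : L (LinearMap.lTensor A (LinearMap.ker πl).subtype w) = 0 := by
      induction w using TensorProduct.induction_on with
      | zero => simp
      | tmul a x => simpa using (hL (x : A) (LinearMap.mem_ker.mp x.2) a).1
      | add u v hu hv => simp [map_add, hu, hv]
    have h2 : L (LinearMap.rTensor A (LinearMap.ker πl).subtype w') = 0 := by
      induction w' using TensorProduct.induction_on with
      | zero => simp
      | tmul x a => simpa using (hL (x : A) (LinearMap.mem_ker.mp x.2) a).2
      | add u v hu hv => simp [map_add, hu, hv]
    rw [h1, h2, add_zero]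
  have hkρ : ∀ z ∈ LinearMap.ker q, ρ z = 0 := by
    refine hkerq ρ fun x hx c => ?_
    exact ⟨(hvan0 x (hmem x hx) c).1, (hvan0 x (hmem x hx) c).2⟩
  have hkρinv : ∀ z ∈ LinearMap.ker q, ρinv z = 0 :=
    hkerq ρinv fun x hx c => hvinv x (hmem x hx) c
  -- q is a surjective coalgebra morphism
  have hπco : IsCoalgHom πl := ⟨hπcomul, hπcounit⟩
  have hq : IsCoalgHom q := IsCoalgHom.map hπco hπco
  have hqsurj : Function.Surjective q := TensorProduct.map_surjective hsurj hsurj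
  -- a linear section of q
  obtain ⟨sec, hsec⟩ := q.exists_rightInverse_of_surjective (LinearMap.range_eq_top.2 hqsurj)
  -- factorisations through q
  have hfact : (ρ ∘ₗ sec) ∘ₗ q = ρ := by
    apply LinearMap.ext; intro z
    have h1 : q (sec (q z) - z) = 0 := by
      rw [map_sub, sub_eq_zero]
      exact LinearMap.congr_fun hsec (q z)
    have h2 := hkρ _ (LinearMap.mem_ker.mpr h1)
    rw [map_sub] at h2
    simp only [LinearMap.comp_apply]
    exact sub_eq_zero.mp h2
  have hfactinv : (ρinv ∘ₗ sec) ∘ₗ q = ρinv := by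
    apply LinearMap.ext; intro z
    have h1 : q (sec (q z) - z) = 0 := by
      rw [map_sub, sub_eq_zero]
      exact LinearMap.congr_fun hsec (q z)
    have h2 := hkρinv _ (LinearMap.mem_ker.mpr h1)
    rw [map_sub] at h2
    simp only [LinearMap.comp_apply]
    exact sub_eq_zero.mp h2
  -- cancelling the surjection q
  have hcancelk : ∀ f g : Q ⊗[k] Q →ₗ[k] k, f ∘ₗ q = g ∘ₗ q → f = g := by
    intro f g h
    apply LinearMap.ext; intro z
    obtain ⟨w, rfl⟩ := hqsurj z
    exact LinearMap.congr_fun h w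
  -- the triple map
  set P := TensorProduct.map q πl with hPdef
  have hP : IsCoalgHom P := IsCoalgHom.map hq hπco
  have hPsurj : Function.Surjective P := TensorProduct.map_surjective hqsurj hsurj
  have hcancel3 : ∀ f g : (Q ⊗[k] Q) ⊗[k] Q →ₗ[k] k, f ∘ₗ P = g ∘ₗ P → f = g := by
    intro f g h
    apply LinearMap.ext; intro z
    obtain ⟨w, rfl⟩ := hPsurj z
    exact LinearMap.congr_fun h w
  have hεπ : ∀ z : A, Coalgebra.counit (R := k) (πl z) = Coalgebra.counit (R := k) z :=
    fun z => LinearMap.congr_fun hπcounit z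
  have comm1 : phi1 ∘ₗ P = q ∘ₗ phi1 := by
    apply TensorProduct.ext'; intro w z
    induction w using TensorProduct.induction_on with
    | zero => simp only [TensorProduct.zero_tmul, map_zero]
    | tmul x y =>
      simp only [hPdef, hqdef, LinearMap.comp_apply, TensorProduct.map_tmul, phi1_tmul, map_smul, hεπ]
    | add u v hu hv =>
      simp only [TensorProduct.add_tmul, map_add] at hu hv ⊢
      rw [hu, hv]
  have comm2 : phi2 ∘ₗ P = q ∘ₗ phi2 := by
    apply TensorProduct.ext'; intro w z
    induction w using TensorProduct.induction_on with
    | zero => simp only [TensorProduct.zero_tmul, map_zero]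
    | tmul x y =>
      simp only [hPdef, hqdef, LinearMap.comp_apply, TensorProduct.map_tmul, phi2_tmul, hπl,
        AlgHom.toLinearMap_apply, map_mul]
    | add u v hu hv =>
      simp only [TensorProduct.add_tmul, map_add] at hu hv ⊢
      rw [hu, hv]
  have comm3 : phi3 ∘ₗ P = q ∘ₗ phi3 := by
    apply TensorProduct.ext'; intro w z
    induction w using TensorProduct.induction_on with
    | zero => simp only [TensorProduct.zero_tmul, map_zero]
    | tmul x y =>
      simp only [hPdef, hqdef, LinearMap.comp_apply, TensorProduct.map_tmul, phi3_tmul, map_smul, hεπ]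
    | add u v hu hv =>
      simp only [TensorProduct.add_tmul, map_add] at hu hv ⊢
      rw [hu, hv]
  have comm4 : phi4 ∘ₗ P = q ∘ₗ phi4 := by
    apply TensorProduct.ext'; intro w z
    induction w using TensorProduct.induction_on with
    | zero => simp only [TensorProduct.zero_tmul, map_zero]
    | tmul x y =>
      simp only [hPdef, hqdef, LinearMap.comp_apply, TensorProduct.map_tmul, phi4_tmul, hπl,
        AlgHom.toLinearMap_apply, map_mul]
    | add u v hu hv =>
      simp only [TensorProduct.add_tmul, map_add] at hu hv ⊢
      rw [hu, hv]
  have t1 : ((ρ ∘ₗ sec) ∘ₗ phi1) ∘ₗ P = ρ ∘ₗ phi1 := by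
    rw [LinearMap.comp_assoc, comm1, ← LinearMap.comp_assoc, hfact]
  have t2 : ((ρ ∘ₗ sec) ∘ₗ phi2) ∘ₗ P = ρ ∘ₗ phi2 := by
    rw [LinearMap.comp_assoc, comm2, ← LinearMap.comp_assoc, hfact]
  have t3 : ((ρ ∘ₗ sec) ∘ₗ phi3) ∘ₗ P = ρ ∘ₗ phi3 := by
    rw [LinearMap.comp_assoc, comm3, ← LinearMap.comp_assoc, hfact]
  have t4 : ((ρ ∘ₗ sec) ∘ₗ phi4) ∘ₗ P = ρ ∘ₗ phi4 := by
    rw [LinearMap.comp_assoc, comm4, ← LinearMap.comp_assoc, hfact]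
  refine ⟨ρ ∘ₗ sec, ρinv ∘ₗ sec, hfact, ?_, ?_, ?_, ?_, ?_⟩
  · -- conv ρ' ρ'inv = counit
    have e := conv_comp (ρ ∘ₗ sec) (ρinv ∘ₗ sec) q hq.1
    rw [hfact, hfactinv, hρinv.1] at e
    exact hcancelk _ _ (e.trans hq.2.symm)
  · -- conv ρ'inv ρ' = counit
    have e := conv_comp (ρinv ∘ₗ sec) (ρ ∘ₗ sec) q hq.1
    rw [hfact, hfactinv, hρinv.2] at e
    exact hcancelk _ _ (e.trans hq.2.symm)
  · -- cocycle condition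
    rw [isCocycle_iff]
    refine hcancel3 _ _ ?_
    have eL := conv_comp ((ρ ∘ₗ sec) ∘ₗ phi1) ((ρ ∘ₗ sec) ∘ₗ phi2) P hP.1
    rw [t1, t2] at eL
    have eR := conv_comp ((ρ ∘ₗ sec) ∘ₗ phi3) ((ρ ∘ₗ sec) ∘ₗ phi4) P hP.1
    rw [t3, t4] at eR
    rw [eL, eR]
    exact (isCocycle_iff ρ).1 hρ
  · -- unitality
    have hq1 : q ((1 : A) ⊗ₜ[k] (1 : A)) = (1 : Q) ⊗ₜ[k] (1 : Q) := by
      simp only [hqdef, TensorProduct.map_tmul, hπl, AlgHom.toLinearMap_apply, map_one]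
    have h1 : ((ρ ∘ₗ sec) ∘ₗ q) ((1 : A) ⊗ₜ[k] 1) = 1 := by rw [hfact]; exact hρ1
    rw [← h1]
    simp only [LinearMap.comp_apply, hq1]
  · -- the deformed multiplications are intertwined
    have hmulA : πl ∘ₗ LinearMap.mul' k A = LinearMap.mul' k Q ∘ₗ q := by
      apply TensorProduct.ext'; intro a b
      simp only [hqdef, LinearMap.comp_apply, LinearMap.mul'_apply, TensorProduct.map_tmul, hπl,
        AlgHom.toLinearMap_apply, map_mul]
    have h1 := convL_comp ρ (ρ ∘ₗ sec) (LinearMap.mul' k A) (LinearMap.mul' k Q) πl q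
      hq.1 hfact hmulA
    have h2 := convR_comp ρinv (ρinv ∘ₗ sec) (convL ρ (LinearMap.mul' k A))
      (convL (ρ ∘ₗ sec) (LinearMap.mul' k Q)) πl q hq.1 hfactinv h1
    unfold deform
    exact h2
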